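/- For every z > 0 and all real α, β with (α, β) ≠ (0, 0), ∫_0^{2π} exp{ i z (α cos θ + β sin θ) } · sin²θ dθ = 2π · [ J_1(z√(α² + β²))/(z√(α² + β²)) − (β²/(α² + β²)) · J_2(z√(α² + β²)) ]. (This computes the single-step characteristic function of a planar random motion whose direction has the non-uniform density (1/(2π)) sin²θ on [0, 2π], i.e. a persistent planar random flight with drift.) -/

import Mathlib

open MeasureTheory Real

/-- The Bessel function of the first kind of order `ν`, defined by its series. -/
noncomputable def besselJ (ν x : ℝ) : ℝ :=
  ∑' k : ℕ, (-1 : ℝ) ^ k * (x / 2) ^ (2 * (k : ℝ) + ν) /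
    (Real.Gamma ((k : ℝ) + 1) * Real.Gamma ((k : ℝ) + ν + 1))

namespace Stmt19Aux

noncomputable def W (m : ℕ) : ℝ := ((2*m).factorial : ℝ) / (4^m * ((m.factorial : ℝ))^2)

lemma fac_ne (n : ℕ) : ((n.factorial : ℝ)) ≠ 0 := by
  exact_mod_cast n.factorial_ne_zero

lemma W_succ (m : ℕ) : W (m+1) = (2*m+1)/(2*m+2) * W m := by
  unfold W
  have h1 : 2*(m+1) = (2*m+1)+1 := by ring
  simp only [h1, Nat.factorial_succ]
  push_cast
  have h2 := fac_ne m
  have h3 := fac_ne (2*m)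
  field_simp
  ring

lemma W_pos (m : ℕ) : 0 < W m := by
  unfold W
  have := m.factorial_pos
  have := (2*m).factorial_pos
  positivity

lemma W_le_one (m : ℕ) : W m ≤ 1 := by
  induction m with
  | zero => simp [W]
  | succ k ih =>
    rw [W_succ]
    have h1 : (2*(k:ℝ)+1)/(2*k+2) ≤ 1 := by
      rw [div_le_one (by positivity)]; linarith
    have := W_pos k
    nlinarith

lemma Wdiff (m : ℕ) :
    W m - W (m+1) = ((2*m).factorial : ℝ) / (2 * 4^m * (m.factorial:ℝ) * ((m+1).factorial:ℝ)) := by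
  rw [W_succ]
  unfold W
  simp only [Nat.factorial_succ]
  push_cast
  have h2 := fac_ne m
  have h3 := fac_ne (2*m)
  field_simp
  ring

lemma M_rec (n : ℕ) : (∫ θ in (0:ℝ)..(2*π), cos θ ^ (n+2))
    = ((n:ℝ)+1)/((n:ℝ)+2) * ∫ θ in (0:ℝ)..(2*π), cos θ ^ n := by
  rw [integral_cos_pow]
  simp [Real.sin_two_pi]

lemma M_even (m : ℕ) : (∫ θ in (0:ℝ)..(2*π), cos θ ^ (2*m)) = 2*π*W m := by
  induction m with
  | zero => simp [W, two_mul]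
  | succ k ih =>
    have h1 : 2*(k+1) = 2*k+2 := by ring
    rw [h1, M_rec, ih, W_succ]
    push_cast
    ring

lemma M_odd (m : ℕ) : (∫ θ in (0:ℝ)..(2*π), cos θ ^ (2*m+1)) = 0 := by
  induction m with
  | zero => simp
  | succ k ih =>
    have h1 : 2*(k+1)+1 = (2*k+1)+2 := by ring
    rw [h1, M_rec, ih, mul_zero]

lemma expand (x : ℝ) (w : ℝ → ℝ) (hw : Continuous w) (hb : ∀ θ, |w θ| ≤ 1) :
    (∫ θ in (0:ℝ)..(2*π), Complex.exp (Complex.I * x * Real.cos θ) * ((w θ : ℝ) : ℂ))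
      = ∑' n : ℕ, (Complex.I * x)^n / (n.factorial : ℂ) *
          ((∫ θ in (0:ℝ)..(2*π), Real.cos θ ^ n * w θ : ℝ) : ℂ) := by
  have h2π : (0:ℝ) ≤ 2*π := by positivity
  set F : ℕ → ℝ → ℂ := fun n θ => (Complex.I * x * Real.cos θ)^n / (n.factorial : ℂ) * ((w θ : ℝ):ℂ)
    with hF
  have hcont : ∀ n, Continuous (F n) := by
    intro n; fun_prop
  have hnorm : ∀ n θ, ‖F n θ‖ ≤ |x|^n / (n.factorial : ℝ) := by
    intro n θ
    have h1 : ‖Complex.I * x * (Real.cos θ:ℂ)‖ ≤ |x| := by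
      rw [norm_mul, norm_mul, Complex.norm_I, one_mul, Complex.norm_real, Complex.norm_real,
        Real.norm_eq_abs, Real.norm_eq_abs]
      calc |x| * |Real.cos θ| ≤ |x| * 1 := by
            have := Real.abs_cos_le_one θ
            have := abs_nonneg x
            nlinarith
        _ = |x| := mul_one _
    have h2 : ‖F n θ‖ = ‖Complex.I * x * (Real.cos θ:ℂ)‖^n / (n.factorial:ℝ) * |w θ| := by
      rw [hF]
      simp [norm_mul, norm_div, norm_pow, Complex.norm_real, Real.norm_eq_abs]
    rw [h2, ← mul_one (|x|^n / (n.factorial:ℝ))]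
    apply mul_le_mul ?_ (hb θ) (abs_nonneg _) (by positivity)
    gcongr
  rw [intervalIntegral.integral_of_le h2π]
  have hint : ∀ n, IntegrableOn (F n) (Set.Ioc (0:ℝ) (2*π)) := fun n => (hcont n).integrableOn_Ioc
  have hsum : Summable (fun n => ∫ θ in Set.Ioc (0:ℝ) (2*π), ‖F n θ‖) := by
    apply Summable.of_nonneg_of_le (fun n => integral_nonneg (fun θ => norm_nonneg _))
      (fun n => ?_) ((Real.summable_pow_div_factorial |x|).mul_right (2*π))
    calc (∫ θ in Set.Ioc (0:ℝ) (2*π), ‖F n θ‖)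
        ≤ ∫ _θ in Set.Ioc (0:ℝ) (2*π), |x|^n / (n.factorial:ℝ) := by
          refine setIntegral_mono_on (hint n).norm ?_ measurableSet_Ioc (fun θ _ => hnorm n θ)
          exact integrableOn_const (by simp [Real.volume_Ioc, ENNReal.mul_eq_top])
      _ = |x|^n / (n.factorial:ℝ) * (2*π) := by
          rw [setIntegral_const, measureReal_def, Real.volume_Ioc, smul_eq_mul]
          rw [ENNReal.toReal_ofReal (by linarith)]
          ring
  have hptw : ∀ θ : ℝ, Complex.exp (Complex.I * x * Real.cos θ) * ((w θ : ℝ):ℂ) = ∑' n, F n θ := by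
    intro θ
    simp only [Complex.exp_eq_exp_ℂ, NormedSpace.exp_eq_tsum_div]
    exact (tsum_mul_right).symm
  calc (∫ θ in Set.Ioc (0:ℝ) (2*π), Complex.exp (Complex.I * x * Real.cos θ) * ((w θ : ℝ):ℂ))
      = ∫ θ in Set.Ioc (0:ℝ) (2*π), ∑' n, F n θ := by simp_rw [hptw]
    _ = ∑' n, ∫ θ in Set.Ioc (0:ℝ) (2*π), F n θ :=
        (integral_tsum_of_summable_integral_norm (fun n => hint n) hsum).symm
    _ = ∑' n : ℕ, (Complex.I * x)^n / (n.factorial : ℂ) *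
          ((∫ θ in (0:ℝ)..(2*π), Real.cos θ ^ n * w θ : ℝ) : ℂ) := by
        refine tsum_congr (fun n => ?_)
        have h5 : ∀ θ : ℝ, F n θ
            = (Complex.I*x)^n/(n.factorial:ℂ) * (((Real.cos θ)^n * w θ : ℝ):ℂ) := by
          intro θ; rw [hF]; push_cast; ring
        simp_rw [h5]
        rw [integral_const_mul, intervalIntegral.integral_of_le h2π]
        congr 1
        exact integral_ofReal

lemma total_eval (x : ℝ) (C : ℕ → ℝ) (hodd : ∀ m, C (2*m+1) = 0)
    (hbd : ∀ m, |C m| ≤ 2*π) :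
    (∑' n : ℕ, (Complex.I*x)^n / (n.factorial : ℂ) * ((C n : ℝ) : ℂ))
      = (((∑' m : ℕ, (-(x^2))^m / (((2*m).factorial : ℝ)) * C (2*m)) : ℝ) : ℂ) := by
  set f : ℕ → ℂ := fun n => (Complex.I*x)^n / (n.factorial : ℂ) * ((C n : ℝ) : ℂ) with hf
  have hfe : ∀ m : ℕ, f (2*m) = (((-(x^2))^m / (((2*m).factorial : ℝ)) * C (2*m) : ℝ) : ℂ) := by
    intro m
    have hsq : (Complex.I*(x:ℂ))^2 = ((-(x^2):ℝ):ℂ) := by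
      rw [mul_pow, Complex.I_sq]; push_cast; ring
    rw [hf]
    show (Complex.I*(x:ℂ))^(2*m) / _ * _ = _
    rw [pow_mul, hsq]
    push_cast
    ring
  have hg : Summable (fun m => (-(x^2))^m / (((2*m).factorial : ℝ)) * C (2*m)) := by
    apply Summable.of_norm_bounded ((Real.summable_pow_div_factorial (x^2)).mul_right (2*π))
    intro m
    have h1 : |(-(x^2))^m / (((2*m).factorial : ℝ)) * C (2*m)|
        = (x^2)^m / (((2*m).factorial : ℝ)) * |C (2*m)| := by
      rw [abs_mul, abs_div, abs_pow, abs_neg, abs_of_nonneg (sq_nonneg x),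
        abs_of_nonneg (by positivity : (0:ℝ) ≤ ((2*m).factorial : ℝ))]
    rw [Real.norm_eq_abs, h1]
    have h2 : ((m.factorial : ℝ)) ≤ ((2*m).factorial : ℝ) := by
      exact_mod_cast Nat.factorial_le (by omega)
    have h3 : (0:ℝ) < m.factorial := by exact_mod_cast m.factorial_pos
    calc (x^2)^m / (((2*m).factorial : ℝ)) * |C (2*m)|
        ≤ (x^2)^m / ((m.factorial : ℝ)) * (2*π) := by
          apply mul_le_mul _ (hbd _) (abs_nonneg _) (by positivity)
          gcongr
      _ = (x^2)^m / ((m.factorial : ℝ)) * (2*π) := rfl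
  have heven : Summable (fun m => f (2*m)) := by
    simp_rw [hfe]
    exact Complex.summable_ofReal.mpr hg
  have hzero : (fun m => f (2*m+1)) = fun _ => (0:ℂ) := by
    funext m
    rw [hf]
    show _ * ((C (2*m+1) : ℝ) : ℂ) = 0
    rw [hodd m]
    simp
  rw [← tsum_even_add_odd heven (by rw [hzero]; exact summable_zero)]
  rw [hzero, tsum_zero, add_zero]
  simp_rw [hfe]
  rw [← Complex.ofReal_tsum]

lemma Lmid (x : ℝ) :
    (∫ θ in (0:ℝ)..(2*π), Complex.exp (Complex.I * x * Real.cos θ)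
      * ((Real.sin θ * Real.cos θ : ℝ) : ℂ)) = 0 := by
  set f : ℝ → ℂ := fun θ => Complex.exp (Complex.I * x * Real.cos θ)
      * ((Real.sin θ * Real.cos θ : ℝ) : ℂ) with hf
  have h := intervalIntegral.integral_comp_sub_left f (2*π) (a := 0) (b := 2*π)
  have h2 : ∀ θ : ℝ, f (2*π - θ) = - f θ := by
    intro θ
    rw [hf]
    simp only [Real.cos_two_pi_sub, Real.sin_two_pi_sub]
    push_cast
    ring
  simp_rw [h2] at h
  rw [intervalIntegral.integral_neg] at h
  have h3 : (2*π - 2*π) = (0:ℝ) := by ring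
  have h4 : (2*π - 0) = (2*π:ℝ) := by ring
  rw [h3, h4] at h
  linear_combination (-1/2 : ℂ) * h

noncomputable def S1 (x : ℝ) : ℝ :=
  ∑' k : ℕ, (-1:ℝ)^k * (x/2)^(2*k) / (2*((k.factorial : ℝ) * ((k+1).factorial : ℝ)))

noncomputable def S2 (x : ℝ) : ℝ :=
  ∑' k : ℕ, (-1:ℝ)^k * (x/2)^(2*k+2) / ((k.factorial : ℝ) * ((k+2).factorial : ℝ))

lemma hx2 (x : ℝ) (j : ℕ) : (x/2)^(2*j) = (x^2)^j / 4^j := by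
  rw [pow_mul, show (x/2)^2 = x^2/4 by ring, div_pow]

lemma S1_summand_summable (x : ℝ) :
    Summable (fun k : ℕ =>
      (-1:ℝ)^k * (x/2)^(2*k) / (2*((k.factorial : ℝ) * ((k+1).factorial : ℝ)))) := by
  apply Summable.of_norm_bounded (Real.summable_pow_div_factorial (x^2/4))
  intro k
  rw [Real.norm_eq_abs, abs_div, abs_mul, abs_pow, abs_pow, abs_neg, abs_one, one_pow, one_mul]
  have h0 : |x/2|^(2*k) = (x^2/4)^k := by
    rw [pow_mul, sq_abs]
    congr 1
    ring
  rw [h0]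
  have h1 : ((k.factorial:ℝ)) ≤ |2*((k.factorial : ℝ) * ((k+1).factorial : ℝ))| := by
    rw [abs_of_nonneg (by positivity)]
    have h2 : (1:ℝ) ≤ ((k+1).factorial : ℝ) := by exact_mod_cast (k+1).factorial_pos
    nlinarith [k.factorial_pos, (show (0:ℝ) < k.factorial by exact_mod_cast k.factorial_pos)]
  gcongr

lemma S2_summand_summable (x : ℝ) :
    Summable (fun k : ℕ =>
      (-1:ℝ)^k * (x/2)^(2*k+2) / ((k.factorial : ℝ) * ((k+2).factorial : ℝ))) := by
  apply Summable.of_norm_bounded ((Real.summable_pow_div_factorial (x^2/4)).mul_right (x^2/4))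
  intro k
  rw [Real.norm_eq_abs, abs_div, abs_mul, abs_pow, abs_pow, abs_neg, abs_one, one_pow, one_mul]
  have hsq : |x/2|^2 = x^2/4 := by rw [sq_abs]; ring
  have h0 : |x/2|^(2*k+2) = (x^2/4)^k * (x^2/4) := by
    rw [pow_add, pow_mul, hsq]
  rw [h0]
  have h2 : ((k.factorial:ℝ)) ≤ |((k.factorial : ℝ) * ((k+2).factorial : ℝ))| := by
    rw [abs_of_nonneg (by positivity)]
    have h3 : (1:ℝ) ≤ ((k+2).factorial : ℝ) := by exact_mod_cast (k+2).factorial_pos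
    nlinarith [(show (0:ℝ) < k.factorial by exact_mod_cast k.factorial_pos)]
  calc (x^2/4)^k * (x^2/4) / |((k.factorial : ℝ) * ((k+2).factorial : ℝ))|
      ≤ (x^2/4)^k * (x^2/4) / ((k.factorial:ℝ)) := by
        gcongr
      _ = (x^2/4)^k / ((k.factorial:ℝ)) * (x^2/4) := by ring

lemma sumSin (x : ℝ) :
    (∑' m : ℕ, (-(x^2))^m / (((2*m).factorial : ℝ)) * (2*π*(W m - W (m+1)))) = 2*π * S1 x := by
  rw [S1, ← tsum_mul_left]
  refine tsum_congr (fun m => ?_)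
  rw [Wdiff, hx2, neg_pow]
  have h2 := fac_ne m
  have h3 := fac_ne (2*m)
  have h4 := fac_ne (m+1)
  field_simp

lemma W_one : W 1 = 1/2 := by
  norm_num [W, Nat.factorial]

lemma sumCos (x : ℝ) :
    (∑' m : ℕ, (-(x^2))^m / (((2*m).factorial : ℝ)) * (2*π*(W (m+1))))
      = 2*π * (S1 x - S2 x) := by
  set t : ℕ → ℝ := fun k =>
    (-1:ℝ)^k * (x/2)^(2*k+2) / ((k.factorial : ℝ) * ((k+2).factorial : ℝ)) with htdef
  set b : ℕ → ℝ := fun m =>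
    (-1:ℝ)^m * (x/2)^(2*m) / (2*((m.factorial : ℝ) * ((m+1).factorial : ℝ))) with hbdef
  have ht : Summable t := S2_summand_summable x
  have hb : Summable b := S1_summand_summable x
  set u : ℕ → ℝ := fun m => Nat.casesOn m 0 t with hudef
  have hu : Summable u := by
    have : Summable (fun n => u (n+1)) := ht
    exact (summable_nat_add_iff 1).mp this
  have hterm : ∀ m : ℕ, (-(x^2))^m / (((2*m).factorial : ℝ)) * (2*π*(W (m+1)))
      = 2*π*(b m - u m) := by
    intro m
    cases m with
    | zero =>
      show (-(x^2))^0 / ((Nat.factorial 0 : ℝ)) * (2*π*(W 1)) = 2*π*(b 0 - 0)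
      rw [W_one, hbdef]
      norm_num [Nat.factorial]
    | succ k =>
      show _ = 2*π*(b (k+1) - t k)
      have e3 : (x/2)^(2*(k+1)) = (x^2)^(k+1)/4^(k+1) := hx2 x (k+1)
      have e4 : (x/2)^(2*k+2) = (x^2)^(k+1)/4^(k+1) := by
        rw [show 2*k+2 = 2*(k+1) by ring]; exact hx2 x (k+1)
      simp only [hbdef, htdef, W]
      rw [e3, e4, neg_pow]
      have e1 : 2*(k+1+1) = ((2*k+2)+1)+1 := by ring
      have e2 : 2*(k+1) = (2*k+1)+1 := by ring
      simp only [e1, e2, Nat.factorial_succ]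
      have h2 := fac_ne k
      have h3 := fac_ne (2*k)
      have h4 := fac_ne (k+1)
      push_cast
      field_simp
      ring
  simp_rw [hterm]
  rw [tsum_mul_left, hb.tsum_sub hu]
  have hut : (∑' m, u m) = ∑' k, t k := by
    rw [hu.tsum_eq_zero_add]
    show (0:ℝ) + _ = _
    rw [zero_add]
  rw [hut, S1, S2]

lemma besselJ_one (x : ℝ) (hx : 0 < x) : besselJ 1 x / x = S1 x := by
  unfold besselJ S1
  have hterm : ∀ k : ℕ, (-1 : ℝ) ^ k * (x / 2) ^ (2 * (k : ℝ) + 1) /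
      (Real.Gamma ((k : ℝ) + 1) * Real.Gamma ((k : ℝ) + 1 + 1))
      = x * ((-1:ℝ)^k * (x/2)^(2*k) / (2*((k.factorial : ℝ) * ((k+1).factorial : ℝ)))) := by
    intro k
    rw [show (2*(k:ℝ)+1) = ((2*k+1 : ℕ):ℝ) by push_cast; ring, Real.rpow_natCast]
    rw [show ((k:ℝ)+1+1) = (((k+1:ℕ)):ℝ)+1 by push_cast; ring]
    rw [Real.Gamma_nat_eq_factorial, Real.Gamma_nat_eq_factorial]
    rw [pow_succ]
    have h1 := fac_ne k
    have h2 := fac_ne (k+1)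
    field_simp
  simp_rw [hterm]
  rw [tsum_mul_left, mul_comm, mul_div_assoc, div_self (ne_of_gt hx), mul_one]

lemma besselJ_two (x : ℝ) (hx : 0 < x) : besselJ 2 x = S2 x := by
  unfold besselJ S2
  refine tsum_congr (fun k => ?_)
  rw [show (2*(k:ℝ)+2) = ((2*k+2 : ℕ):ℝ) by push_cast; ring, Real.rpow_natCast]
  rw [show ((k:ℝ)+2+1) = (((k+2:ℕ)):ℝ)+1 by push_cast; ring]
  rw [Real.Gamma_nat_eq_factorial, Real.Gamma_nat_eq_factorial]

lemma Lsin (x : ℝ) :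
    (∫ θ in (0:ℝ)..(2*π), Complex.exp (Complex.I * x * Real.cos θ)
      * ((Real.sin θ^2 : ℝ):ℂ)) = (((2*π * S1 x : ℝ)) : ℂ) := by
  have hbw : ∀ θ:ℝ, |Real.sin θ^2| ≤ 1 := fun θ => by
    rw [abs_of_nonneg (sq_nonneg _)]; exact Real.sin_sq_le_one θ
  have h1 := expand x (fun θ => Real.sin θ^2) (by fun_prop) hbw
  set C : ℕ → ℝ := fun n => ∫ θ in (0:ℝ)..(2*π), Real.cos θ^n * Real.sin θ^2 with hC
  have hCval : ∀ n, C n = (∫ θ in (0:ℝ)..(2*π), Real.cos θ^n)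
      - (∫ θ in (0:ℝ)..(2*π), Real.cos θ^(n+2)) := by
    intro n
    rw [hC]
    rw [← intervalIntegral.integral_sub ((Continuous.intervalIntegrable (by fun_prop)) _ _)
      ((Continuous.intervalIntegrable (by fun_prop)) _ _)]
    refine intervalIntegral.integral_congr (fun θ _ => ?_)
    rw [Real.sin_sq θ]
    ring
  have hodd : ∀ m, C (2*m+1) = 0 := by
    intro m
    rw [hCval, M_odd m, show 2*m+1+2 = 2*(m+1)+1 by ring, M_odd]
    ring
  have heven : ∀ m, C (2*m) = 2*π*(W m - W (m+1)) := by
    intro m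
    rw [hCval, M_even, show 2*m+2 = 2*(m+1) by ring, M_even]
    ring
  have hd0 : ∀ m, 0 ≤ W m - W (m+1) := by
    intro m
    rw [Wdiff]
    positivity
  have hbd : ∀ n, |C n| ≤ 2*π := by
    intro n
    rcases Nat.even_or_odd n with ⟨m, hm⟩ | ⟨m, hm⟩
    · subst hm
      rw [show m + m = 2*m by ring, heven]
      have h5 := hd0 m
      have h6 : W m - W (m+1) ≤ 1 := by
        have := W_pos (m+1)
        have := W_le_one m
        linarith
      rw [abs_of_nonneg (by positivity)]
      nlinarith [pi_pos]
    · subst hm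
      rw [hodd]
      simp
      positivity
  have h2 := total_eval x C hodd hbd
  rw [h1, h2]
  have h3 : (∑' m:ℕ, (-(x^2))^m / (((2*m).factorial:ℝ)) * C (2*m)) = 2*π*S1 x := by
    simp_rw [heven]
    exact sumSin x
  rw [h3]

lemma Lcos (x : ℝ) :
    (∫ θ in (0:ℝ)..(2*π), Complex.exp (Complex.I * x * Real.cos θ)
      * ((Real.cos θ^2 : ℝ):ℂ)) = (((2*π * (S1 x - S2 x) : ℝ)) : ℂ) := by
  have hbw : ∀ θ:ℝ, |Real.cos θ^2| ≤ 1 := fun θ => by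
    rw [abs_of_nonneg (sq_nonneg _)]; exact Real.cos_sq_le_one θ
  have h1 := expand x (fun θ => Real.cos θ^2) (by fun_prop) hbw
  set C : ℕ → ℝ := fun n => ∫ θ in (0:ℝ)..(2*π), Real.cos θ^n * Real.cos θ^2 with hC
  have hCval : ∀ n, C n = (∫ θ in (0:ℝ)..(2*π), Real.cos θ^(n+2)) := by
    intro n
    rw [hC]
    refine intervalIntegral.integral_congr (fun θ _ => ?_)
    rw [pow_add]
  have hodd : ∀ m, C (2*m+1) = 0 := by
    intro m
    rw [hCval, show 2*m+1+2 = 2*(m+1)+1 by ring, M_odd]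
  have heven : ∀ m, C (2*m) = 2*π*(W (m+1)) := by
    intro m
    rw [hCval, show 2*m+2 = 2*(m+1) by ring, M_even]
  have hbd : ∀ n, |C n| ≤ 2*π := by
    intro n
    rcases Nat.even_or_odd n with ⟨m, hm⟩ | ⟨m, hm⟩
    · subst hm
      rw [show m + m = 2*m by ring, heven]
      have h5 := W_pos (m+1)
      have h6 := W_le_one (m+1)
      rw [abs_of_nonneg (by positivity)]
      nlinarith [pi_pos]
    · subst hm
      rw [hodd]
      simp
      positivity
  have h2 := total_eval x C hodd hbd
  rw [h1, h2]
  have h3 : (∑' m:ℕ, (-(x^2))^m / (((2*m).factorial:ℝ)) * C (2*m)) = 2*π*(S1 x - S2 x) := by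
    simp_rw [heven]
    exact sumCos x
  rw [h3]

end Stmt19Aux

open Stmt19Aux in
/-- Single-step characteristic function of the persistent planar random flight with drift:
`∫_0^{2π} e^{iz(α cos θ + β sin θ)} sin²θ dθ
 = 2π [ J_1(z√(α²+β²))/(z√(α²+β²)) − (β²/(α²+β²)) J_2(z√(α²+β²)) ]`. -/
theorem stmt19 (z α β : ℝ) (hz : 0 < z) (hαβ : (α, β) ≠ (0, 0)) :
    ∫ θ in (0 : ℝ)..(2 * π),
      Complex.exp (Complex.I * z * (α * Real.cos θ + β * Real.sin θ)) *
        ((Real.sin θ ^ 2 : ℝ) : ℂ) =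
    ((2 * π *
        (besselJ 1 (z * Real.sqrt (α ^ 2 + β ^ 2)) / (z * Real.sqrt (α ^ 2 + β ^ 2)) -
          β ^ 2 / (α ^ 2 + β ^ 2) * besselJ 2 (z * Real.sqrt (α ^ 2 + β ^ 2))) : ℝ) : ℂ) := by
  have hr2 : (0:ℝ) < α^2 + β^2 := by
    have hne : ¬(α = 0 ∧ β = 0) := by
      intro ⟨h1, h2⟩; exact hαβ (by simp [h1, h2])
    rcases not_and_or.mp hne with h | h
    · have : 0 < α^2 := lt_of_le_of_ne (sq_nonneg α) (Ne.symm (pow_ne_zero 2 h))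
      nlinarith [sq_nonneg β]
    · have : 0 < β^2 := lt_of_le_of_ne (sq_nonneg β) (Ne.symm (pow_ne_zero 2 h))
      nlinarith [sq_nonneg α]
  set r : ℝ := Real.sqrt (α^2 + β^2) with hrdef
  have hr : 0 < r := Real.sqrt_pos.mpr hr2
  have hrr : r^2 = α^2 + β^2 := Real.sq_sqrt hr2.le
  set x : ℝ := z * r with hxdef
  have hx : 0 < x := mul_pos hz hr
  -- find the angle φ
  set w0 : ℂ := (α:ℂ) + (β:ℂ) * Complex.I with hw0def
  have hw0 : w0 ≠ 0 := by
    intro hcon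
    have hre := congrArg Complex.re hcon
    have him := congrArg Complex.im hcon
    simp [hw0def] at hre him
    rw [hre, him] at hr2
    norm_num at hr2
  have habs : ‖w0‖ = r := by
    rw [hw0def, Complex.norm_def, Complex.normSq_add_mul_I, hrdef]
  set φ : ℝ := Complex.arg w0 with hφdef
  have hcphi : Real.cos φ = α / r := by
    rw [hφdef, Complex.cos_arg hw0, habs, hw0def]
    simp
  have hsphi : Real.sin φ = β / r := by
    rw [hφdef, Complex.sin_arg, habs, hw0def]
    simp
  have hkey : ∀ θ : ℝ, Complex.I * (z:ℂ) * ((α:ℂ) * (Real.cos θ:ℂ) + (β:ℂ) * (Real.sin θ:ℂ))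
      = Complex.I * (x:ℂ) * ((Real.cos (θ - φ):ℝ):ℂ) := by
    intro θ
    have hreal : z * (α * Real.cos θ + β * Real.sin θ) = x * Real.cos (θ - φ) := by
      rw [Real.cos_sub, hcphi, hsphi, hxdef]
      field_simp
    calc Complex.I * (z:ℂ) * ((α:ℂ) * (Real.cos θ:ℂ) + (β:ℂ) * (Real.sin θ:ℂ))
        = Complex.I * ((z * (α * Real.cos θ + β * Real.sin θ) : ℝ) : ℂ) := by push_cast; ring
      _ = Complex.I * ((x * Real.cos (θ - φ) : ℝ) : ℂ) := by rw [hreal]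
      _ = Complex.I * (x:ℂ) * ((Real.cos (θ - φ):ℝ):ℂ) := by push_cast; ring
  set g : ℝ → ℂ := fun θ =>
    Complex.exp (Complex.I * (x:ℂ) * ((Real.cos (θ - φ):ℝ):ℂ)) * ((Real.sin θ^2 : ℝ):ℂ) with hgdef
  have hper : Function.Periodic g (2*π) := by
    intro θ
    simp only [hgdef]
    rw [show θ + 2*π - φ = (θ - φ) + 2*π by ring, Real.cos_add_two_pi, Real.sin_add_two_pi]
  have hstep1 : (∫ θ in (0:ℝ)..(2*π),
      Complex.exp (Complex.I * z * (α * Real.cos θ + β * Real.sin θ)) * ((Real.sin θ^2:ℝ):ℂ))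
      = ∫ θ in (0:ℝ)..(2*π), g θ := by
    refine intervalIntegral.integral_congr (fun θ _ => ?_)
    simp only [hgdef]
    rw [hkey θ]
  have hstep2 : (∫ θ in (0:ℝ)..(2*π), g θ) = ∫ θ in (0:ℝ)..(2*π), g (θ + φ) := by
    have h := hper.intervalIntegral_add_eq 0 φ
    rw [zero_add] at h
    calc (∫ θ in (0:ℝ)..(2*π), g θ) = ∫ θ in φ..(φ + 2*π), g θ := h
      _ = ∫ θ in (0+φ)..(2*π+φ), g θ := by congr 1 <;> ring
      _ = ∫ θ in (0:ℝ)..(2*π), g (θ + φ) := (intervalIntegral.integral_comp_add_right g φ).symm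
  have hexpd : ∀ θ:ℝ, g (θ + φ)
      = ((Real.cos φ^2 : ℝ):ℂ) *
          (Complex.exp (Complex.I * (x:ℂ) * ((Real.cos θ:ℝ):ℂ)) * ((Real.sin θ^2:ℝ):ℂ))
      + ((2*Real.sin φ*Real.cos φ : ℝ):ℂ) *
          (Complex.exp (Complex.I * (x:ℂ) * ((Real.cos θ:ℝ):ℂ)) * ((Real.sin θ*Real.cos θ:ℝ):ℂ))
      + ((Real.sin φ^2 : ℝ):ℂ) *
          (Complex.exp (Complex.I * (x:ℂ) * ((Real.cos θ:ℝ):ℂ)) * ((Real.cos θ^2:ℝ):ℂ)) := by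
    intro θ
    simp only [hgdef]
    rw [show θ + φ - φ = θ by ring]
    have hsin : Real.sin (θ+φ)^2
        = Real.cos φ^2 * Real.sin θ^2 + (2*Real.sin φ*Real.cos φ)*(Real.sin θ*Real.cos θ)
          + Real.sin φ^2 * Real.cos θ^2 := by
      rw [Real.sin_add]
      ring
    rw [hsin]
    push_cast
    ring
  have hsplit : (∫ θ in (0:ℝ)..(2*π), g (θ + φ))
      = ((Real.cos φ^2 : ℝ):ℂ) * (∫ θ in (0:ℝ)..(2*π),
          Complex.exp (Complex.I * (x:ℂ) * ((Real.cos θ:ℝ):ℂ)) * ((Real.sin θ^2:ℝ):ℂ))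
      + ((2*Real.sin φ*Real.cos φ : ℝ):ℂ) * (∫ θ in (0:ℝ)..(2*π),
          Complex.exp (Complex.I * (x:ℂ) * ((Real.cos θ:ℝ):ℂ)) * ((Real.sin θ*Real.cos θ:ℝ):ℂ))
      + ((Real.sin φ^2 : ℝ):ℂ) * (∫ θ in (0:ℝ)..(2*π),
          Complex.exp (Complex.I * (x:ℂ) * ((Real.cos θ:ℝ):ℂ)) * ((Real.cos θ^2:ℝ):ℂ)) := by
    simp_rw [hexpd]
    rw [intervalIntegral.integral_add ?_ ((Continuous.intervalIntegrable (by fun_prop)) _ _),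
      intervalIntegral.integral_add ((Continuous.intervalIntegrable (by fun_prop)) _ _)
        ((Continuous.intervalIntegrable (by fun_prop)) _ _),
      intervalIntegral.integral_const_mul, intervalIntegral.integral_const_mul,
      intervalIntegral.integral_const_mul]
    exact (Continuous.intervalIntegrable (by fun_prop)) _ _
  rw [hstep1, hstep2, hsplit, Lsin x, Lmid x, Lcos x]
  rw [mul_zero, add_zero]
  have hs2 : Real.sin φ^2 = β^2/(α^2+β^2) := by
    rw [hsphi, div_pow, hrr]
  have hc2 : Real.cos φ^2 = 1 - β^2/(α^2+β^2) := by
    have h := Real.sin_sq_add_cos_sq φ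
    rw [← hs2]
    linarith
  rw [besselJ_one x hx, besselJ_two x hx, hc2, hs2]
  push_cast
  ring
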